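/- Let q* satisfy q* = H q*, and let ω* = Σ⁻¹ (∑_z μ(z)·φ(z)·q*(z)) (so that q_{ω*} = Π q*). If (ωₙ)_{n∈ℕ} is a sequence in ℝ^k such that for all sufficiently large n one has q_{ωₙ} = Π(Hⁿ q_{ωₙ}), then lim_{n→∞} ‖ω* − ωₙ‖₂ = 0. -/

import Mathlib

open Finset Matrix

variable {X A : Type*}

noncomputable def bellman [Fintype X] [Fintype A] [Nonempty A]
    (P : X → A → X → ℝ) (r : X × A → ℝ) (γ : ℝ) (q : X × A → ℝ) :
    X × A → ℝ :=
  fun z => r z + γ * ∑ x' : X, P z.1 z.2 x' *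
    Finset.univ.sup' Finset.univ_nonempty (fun a' : A => q (x', a'))

noncomputable def supNorm [Fintype X] [Fintype A] [Nonempty X] [Nonempty A]
    (q : X × A → ℝ) : ℝ :=
  Finset.univ.sup' Finset.univ_nonempty (fun z : X × A => |q z|)

noncomputable def munorm [Fintype X] [Fintype A] (μ q : X × A → ℝ) : ℝ :=
  Real.sqrt (∑ z : X × A, μ z * q z ^ 2)

def qlin {k : ℕ} (φ : X × A → Fin k → ℝ) (ω : Fin k → ℝ) : X × A → ℝ :=
  fun z => φ z ⬝ᵥ ω

noncomputable def cov [Fintype X] [Fintype A] {k : ℕ}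
    (μ : X × A → ℝ) (φ : X × A → Fin k → ℝ) : Matrix (Fin k) (Fin k) ℝ :=
  ∑ z : X × A, μ z • Matrix.vecMulVec (φ z) (φ z)

noncomputable def proj [Fintype X] [Fintype A] {k : ℕ}
    (μ : X × A → ℝ) (φ : X × A → Fin k → ℝ) (q : X × A → ℝ) : X × A → ℝ :=
  fun z => φ z ⬝ᵥ (cov μ φ)⁻¹.mulVec (∑ z' : X × A, (μ z' * q z') • φ z')

noncomputable def enorm2 {k : ℕ} (v : Fin k → ℝ) : ℝ :=
  Real.sqrt (∑ i, v i ^ 2)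

noncomputable def phiMax [Fintype X] [Fintype A] [Nonempty X] [Nonempty A]
    {k : ℕ} (φ : X × A → Fin k → ℝ) : ℝ :=
  Finset.univ.sup' Finset.univ_nonempty (fun z : X × A => enorm2 (φ z))

noncomputable def sigmaMax {k : ℕ} (M : Matrix (Fin k) (Fin k) ℝ) : ℝ :=
  ‖LinearMap.toContinuousLinearMap (Matrix.toEuclideanLin M)‖

noncomputable def gmap [Fintype X] [Fintype A] [Nonempty A] {k : ℕ}
    (P : X → A → X → ℝ) (r : X × A → ℝ) (γ : ℝ)
    (μ : X × A → ℝ) (φ : X × A → Fin k → ℝ) (n : ℕ) (ω : Fin k → ℝ) :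
    Fin k → ℝ :=
  ∑ z : X × A, (μ z * ((bellman P r γ)^[n] (qlin φ ω) z - qlin φ ω z)) • φ z

-- piece 1: sup' difference bound
lemma sup'_abs_sub_le {ι : Type*} (s : Finset ι) (hs : s.Nonempty) (f g : ι → ℝ) {c : ℝ}
    (h : ∀ a ∈ s, |f a - g a| ≤ c) : |s.sup' hs f - s.sup' hs g| ≤ c := by
  rw [abs_sub_le_iff]
  constructor
  · rw [sub_le_iff_le_add]
    refine Finset.sup'_le _ _ fun a ha => ?_
    have h1 := (abs_sub_le_iff.mp (h a ha)).1
    have h2 := Finset.le_sup' g ha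
    linarith
  · rw [sub_le_iff_le_add]
    refine Finset.sup'_le _ _ fun a ha => ?_
    have h1 := (abs_sub_le_iff.mp (h a ha)).2
    have h2 := Finset.le_sup' f ha
    linarith

section basic
variable [Fintype X] [Fintype A] [Nonempty X] [Nonempty A]

lemma abs_le_supNorm (q : X × A → ℝ) (z : X × A) : |q z| ≤ supNorm q := by
  unfold supNorm; exact Finset.le_sup' (fun z : X × A => |q z|) (Finset.mem_univ z)

lemma supNorm_nonneg (q : X × A → ℝ) : 0 ≤ supNorm q :=
  le_trans (abs_nonneg _) (abs_le_supNorm q (Classical.arbitrary _))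

lemma supNorm_le {q : X × A → ℝ} {c : ℝ} (h : ∀ z, |q z| ≤ c) : supNorm q ≤ c := by
  unfold supNorm; exact Finset.sup'_le _ (fun z : X × A => |q z|) fun z _ => h z

lemma supNorm_add_le (f g : X × A → ℝ) : supNorm (f + g) ≤ supNorm f + supNorm g :=
  supNorm_le fun z => (abs_add_le _ _).trans
    (add_le_add (abs_le_supNorm f z) (abs_le_supNorm g z))

lemma bellman_contraction (P : X → A → X → ℝ) (r : X × A → ℝ) {γ : ℝ}
    (hγ0 : 0 ≤ γ) (hP0 : ∀ x a x', 0 ≤ P x a x') (hP1 : ∀ x a, ∑ x' : X, P x a x' = 1)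
    (q q' : X × A → ℝ) :
    supNorm (bellman P r γ q - bellman P r γ q') ≤ γ * supNorm (q - q') := by
  apply supNorm_le
  intro z
  have hz : (bellman P r γ q - bellman P r γ q') z
      = γ * ∑ x' : X, P z.1 z.2 x' *
        (Finset.univ.sup' Finset.univ_nonempty (fun a' : A => q (x', a'))
          - Finset.univ.sup' Finset.univ_nonempty (fun a' : A => q' (x', a'))) := by
    simp only [Pi.sub_apply, bellman, mul_sub]
    rw [Finset.sum_sub_distrib]
    ring
  rw [hz, abs_mul, abs_of_nonneg hγ0]
  refine mul_le_mul_of_nonneg_left ?_ hγ0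
  calc |∑ x' : X, P z.1 z.2 x' * _| ≤ ∑ x' : X, |P z.1 z.2 x' * _| :=
        Finset.abs_sum_le_sum_abs _ _
    _ ≤ ∑ x' : X, P z.1 z.2 x' * supNorm (q - q') := by
        refine Finset.sum_le_sum fun x' _ => ?_
        rw [abs_mul, abs_of_nonneg (hP0 _ _ _)]
        refine mul_le_mul_of_nonneg_left ?_ (hP0 _ _ _)
        refine sup'_abs_sub_le _ _ _ _ fun a' _ => ?_
        exact abs_le_supNorm (q - q') (x', a')
    _ = supNorm (q - q') := by rw [← Finset.sum_mul, hP1, one_mul]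

lemma bellman_iter_contraction (P : X → A → X → ℝ) (r : X × A → ℝ) {γ : ℝ}
    (hγ0 : 0 ≤ γ) (hP0 : ∀ x a x', 0 ≤ P x a x') (hP1 : ∀ x a, ∑ x' : X, P x a x' = 1)
    (q q' : X × A → ℝ) (n : ℕ) :
    supNorm ((bellman P r γ)^[n] q - (bellman P r γ)^[n] q')
      ≤ γ ^ n * supNorm (q - q') := by
  induction n with
  | zero => simp
  | succ n ih =>
    rw [Function.iterate_succ_apply', Function.iterate_succ_apply']
    calc supNorm _ ≤ γ * supNorm ((bellman P r γ)^[n] q - (bellman P r γ)^[n] q') :=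
          bellman_contraction P r hγ0 hP0 hP1 _ _
      _ ≤ γ * (γ ^ n * supNorm (q - q')) := mul_le_mul_of_nonneg_left ih hγ0
      _ = γ ^ (n + 1) * supNorm (q - q') := by ring

end basic

section proj
variable [Fintype X] [Fintype A] {k : ℕ}

noncomputable def ipm [Fintype X] [Fintype A] (μ f g : X × A → ℝ) : ℝ :=
  ∑ z : X × A, μ z * (f z * g z)

lemma munorm_nonneg (μ f : X × A → ℝ) : 0 ≤ munorm μ f := Real.sqrt_nonneg _

lemma munorm_sq {μ : X × A → ℝ} (hμ0 : ∀ z, 0 ≤ μ z) (f : X × A → ℝ) :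
    munorm μ f ^ 2 = ∑ z : X × A, μ z * f z ^ 2 := by
  rw [munorm, Real.sq_sqrt]
  exact Finset.sum_nonneg fun z _ => mul_nonneg (hμ0 z) (sq_nonneg _)

lemma ipm_self {μ : X × A → ℝ} (hμ0 : ∀ z, 0 ≤ μ z) (f : X × A → ℝ) :
    ipm μ f f = munorm μ f ^ 2 := by
  rw [munorm_sq hμ0, ipm]
  exact Finset.sum_congr rfl fun z _ => by ring

lemma ipm_le {μ : X × A → ℝ} (hμ0 : ∀ z, 0 ≤ μ z) (f g : X × A → ℝ) :
    ipm μ f g ≤ munorm μ f * munorm μ g := by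
  have h : ∀ z : X × A, μ z * (f z * g z)
      = (Real.sqrt (μ z) * f z) * (Real.sqrt (μ z) * g z) := by
    intro z
    rw [mul_mul_mul_comm, Real.mul_self_sqrt (hμ0 z)]
  have h2 : ∀ z : X × A, (Real.sqrt (μ z) * f z) ^ 2 = μ z * f z ^ 2 := by
    intro z; rw [mul_pow, Real.sq_sqrt (hμ0 z)]
  have h3 : ∀ z : X × A, (Real.sqrt (μ z) * g z) ^ 2 = μ z * g z ^ 2 := by
    intro z; rw [mul_pow, Real.sq_sqrt (hμ0 z)]
  calc ipm μ f g = ∑ z : X × A, (Real.sqrt (μ z) * f z) * (Real.sqrt (μ z) * g z) :=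
        Finset.sum_congr rfl fun z _ => h z
    _ ≤ Real.sqrt (∑ z : X × A, (Real.sqrt (μ z) * f z) ^ 2)
        * Real.sqrt (∑ z : X × A, (Real.sqrt (μ z) * g z) ^ 2) :=
        Real.sum_mul_le_sqrt_mul_sqrt _ _ _
    _ = munorm μ f * munorm μ g := by
        rw [munorm, munorm]
        congr 1 <;> [rw [Finset.sum_congr rfl fun z _ => h2 z];
          rw [Finset.sum_congr rfl fun z _ => h3 z]]

lemma cov_mulVec (μ : X × A → ℝ) (φ : X × A → Fin k → ℝ) (w : Fin k → ℝ) :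
    (cov μ φ).mulVec w = ∑ z : X × A, (μ z * (φ z ⬝ᵥ w)) • φ z := by
  funext i
  simp only [cov, Matrix.mulVec, dotProduct, Matrix.sum_apply, Matrix.smul_apply,
    Matrix.vecMulVec_apply, smul_eq_mul, Finset.sum_apply, Pi.smul_apply, Finset.sum_mul]
  rw [Finset.sum_comm]
  exact Finset.sum_congr rfl fun z _ => by rw [Finset.mul_sum, Finset.sum_mul]; exact Finset.sum_congr rfl fun j _ => by ring

lemma ipm_qlin (μ : X × A → ℝ) (φ : X × A → Fin k → ℝ) (q : X × A → ℝ) (w : Fin k → ℝ) :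
    ipm μ q (qlin φ w) = (∑ z : X × A, (μ z * q z) • φ z) ⬝ᵥ w := by
  rw [ipm, dotProduct]
  simp only [Finset.sum_apply, Pi.smul_apply, smul_eq_mul, Finset.sum_mul]
  conv_rhs => rw [Finset.sum_comm]
  refine Finset.sum_congr rfl fun z _ => ?_
  rw [qlin, dotProduct, Finset.mul_sum, Finset.mul_sum]
  exact Finset.sum_congr rfl fun i _ => by ring

lemma ipm_qlin_qlin (μ : X × A → ℝ) (φ : X × A → Fin k → ℝ) (u w : Fin k → ℝ) :
    ipm μ (qlin φ u) (qlin φ w) = ((cov μ φ).mulVec u) ⬝ᵥ w := by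
  rw [ipm_qlin, cov_mulVec]
  rfl

lemma proj_eq_qlin (μ : X × A → ℝ) (φ : X × A → Fin k → ℝ) (q : X × A → ℝ) :
    proj μ φ q = qlin φ ((cov μ φ)⁻¹.mulVec (∑ z' : X × A, (μ z' * q z') • φ z')) := rfl

lemma ipm_proj {μ : X × A → ℝ} {φ : X × A → Fin k → ℝ} (hSig : IsUnit (cov μ φ).det)
    (q : X × A → ℝ) (w : Fin k → ℝ) :
    ipm μ (proj μ φ q) (qlin φ w) = ipm μ q (qlin φ w) := by
  rw [proj_eq_qlin, ipm_qlin_qlin, ipm_qlin, Matrix.mulVec_mulVec, Matrix.mul_nonsing_inv _ hSig,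
    Matrix.one_mulVec]

lemma ipm_comm (μ f g : X × A → ℝ) : ipm μ f g = ipm μ g f := by
  unfold ipm; exact Finset.sum_congr rfl fun z _ => by ring

lemma proj_nonexpansive {μ : X × A → ℝ} {φ : X × A → Fin k → ℝ} (hμ0 : ∀ z, 0 ≤ μ z)
    (hSig : IsUnit (cov μ φ).det) (q : X × A → ℝ) :
    munorm μ (proj μ φ q) ≤ munorm μ q := by
  have h1 : ipm μ (proj μ φ q) (proj μ φ q) = ipm μ q (proj μ φ q) :=
    ipm_proj hSig q ((cov μ φ)⁻¹.mulVec (∑ z' : X × A, (μ z' * q z') • φ z'))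
  have h2 := ipm_self hμ0 (proj μ φ q)
  have h3 : ipm μ q (proj μ φ q) ≤ munorm μ q * munorm μ (proj μ φ q) := ipm_le hμ0 _ _
  have h4 := munorm_nonneg μ (proj μ φ q)
  have h5 := munorm_nonneg μ q
  nlinarith

lemma proj_sub (μ : X × A → ℝ) (φ : X × A → Fin k → ℝ) (q q' : X × A → ℝ) :
    proj μ φ q - proj μ φ q' = proj μ φ (q - q') := by
  have hsum : (∑ z' : X × A, (μ z' * (q z' - q' z')) • φ z')
      = (∑ z' : X × A, (μ z' * q z') • φ z') - ∑ z' : X × A, (μ z' * q' z') • φ z' := by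
    rw [← Finset.sum_sub_distrib]
    exact Finset.sum_congr rfl fun z' _ => by simp [mul_sub, sub_smul]
  funext z
  simp only [Pi.sub_apply, proj, hsum, Matrix.mulVec_sub, dotProduct_sub]

end proj

section norms
variable [Fintype X] [Fintype A] [Nonempty X] [Nonempty A] {k : ℕ}

lemma munorm_le_supNorm {μ : X × A → ℝ} (hμ0 : ∀ z, 0 ≤ μ z)
    (hμ1 : ∑ z : X × A, μ z = 1) (f : X × A → ℝ) : munorm μ f ≤ supNorm f := by
  have h : ∑ z : X × A, μ z * f z ^ 2 ≤ supNorm f ^ 2 := by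
    calc ∑ z : X × A, μ z * f z ^ 2 ≤ ∑ z : X × A, μ z * supNorm f ^ 2 := by
          refine Finset.sum_le_sum fun z _ => mul_le_mul_of_nonneg_left ?_ (hμ0 z)
          rw [← sq_abs]
          exact pow_le_pow_left₀ (abs_nonneg _) (abs_le_supNorm f z) 2
      _ = supNorm f ^ 2 := by rw [← Finset.sum_mul, hμ1, one_mul]
  calc munorm μ f ≤ Real.sqrt (supNorm f ^ 2) := Real.sqrt_le_sqrt h
    _ = supNorm f := Real.sqrt_sq (supNorm_nonneg f)

lemma sqrt_mumin_supNorm_le {μ : X × A → ℝ} {μmin : ℝ} (hμmin : 0 < μmin)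
    (hμ : ∀ z, μmin ≤ μ z) (f : X × A → ℝ) :
    Real.sqrt μmin * supNorm f ≤ munorm μ f := by
  rw [mul_comm, ← le_div_iff₀ (Real.sqrt_pos.mpr hμmin)]
  refine supNorm_le fun z => ?_
  rw [le_div_iff₀ (Real.sqrt_pos.mpr hμmin), munorm]
  rw [← Real.sqrt_sq (abs_nonneg (f z)), ← Real.sqrt_mul (sq_nonneg _)]
  refine Real.sqrt_le_sqrt ?_
  rw [sq_abs, mul_comm]
  calc μmin * f z ^ 2 ≤ μ z * f z ^ 2 :=
        mul_le_mul_of_nonneg_right (hμ z) (sq_nonneg _)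
    _ ≤ ∑ z' : X × A, μ z' * f z' ^ 2 := by
        refine Finset.single_le_sum (f := fun z' : X × A => μ z' * f z' ^ 2)
          (fun z' _ => mul_nonneg (le_trans hμmin.le (hμ z')) (sq_nonneg _))
          (Finset.mem_univ z)

lemma exists_coercive {μ : X × A → ℝ} {μmin : ℝ} (φ : X × A → Fin k → ℝ)
    (hμmin : 0 < μmin) (hμ : ∀ z, μmin ≤ μ z) (hSig : IsUnit (cov μ φ).det) :
    ∃ c : ℝ, 0 < c ∧ ∀ v : Fin k → ℝ, c * enorm2 v ≤ munorm μ (qlin φ v) := by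
  have hμ0 : ∀ z, 0 ≤ μ z := fun z => le_trans hμmin.le (hμ z)
  rcases Nat.eq_zero_or_pos k with hk | hk
  · refine ⟨1, one_pos, fun v => ?_⟩
    subst hk
    simp [enorm2, munorm_nonneg]
  -- k ≥ 1
  set E := EuclideanSpace ℝ (Fin k)
  set G : E → ℝ := fun v => ∑ z : X × A, μ z * (φ z ⬝ᵥ (fun i => v i)) ^ 2 with hG
  have hGcont : Continuous G := by
    refine continuous_finset_sum _ fun z _ => Continuous.mul continuous_const ?_
    refine Continuous.pow ?_ 2
    refine continuous_finset_sum _ fun i _ => Continuous.mul continuous_const ?_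
    exact (EuclideanSpace.proj i : E →L[ℝ] ℝ).continuous
  have hsph : (Metric.sphere (0 : E) 1).Nonempty := by
    refine ⟨EuclideanSpace.single ⟨0, hk⟩ (1 : ℝ), ?_⟩
    rw [mem_sphere_zero_iff_norm, EuclideanSpace.norm_single]
    simp
  obtain ⟨v₀, hv₀, hmin⟩ := (isCompact_sphere (0 : E) 1).exists_isMinOn hsph
    hGcont.continuousOn
  set m := G v₀ with hm
  have hv₀norm : ‖v₀‖ = 1 := mem_sphere_zero_iff_norm.mp hv₀
  have hmpos : 0 < m := by
    rcases lt_or_eq_of_le (Finset.sum_nonneg fun z _ =>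
      mul_nonneg (hμ0 z) (sq_nonneg _) : (0:ℝ) ≤ m) with h | h
    · exact h
    · exfalso
      have hz : ∀ z : X × A, φ z ⬝ᵥ (fun i => v₀ i) = 0 := by
        intro z
        have := (Finset.sum_eq_zero_iff_of_nonneg fun z _ =>
          mul_nonneg (hμ0 z) (sq_nonneg _)).mp h.symm z (Finset.mem_univ z)
        have hμz : 0 < μ z := lt_of_lt_of_le hμmin (hμ z)
        have : (φ z ⬝ᵥ (fun i => v₀ i)) ^ 2 = 0 := by
          rcases mul_eq_zero.mp this with h' | h'
          · exact absurd h' (ne_of_gt hμz)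
          · exact h'
        exact pow_eq_zero_iff (by norm_num) |>.mp this
      have hcov : (cov μ φ).mulVec (fun i => v₀ i) = 0 := by
        rw [cov_mulVec]
        refine Finset.sum_eq_zero fun z _ => ?_
        rw [hz z, mul_zero, zero_smul]
      have : (fun i => v₀ i) = (0 : Fin k → ℝ) := by
        have h1 : (cov μ φ)⁻¹.mulVec ((cov μ φ).mulVec (fun i => v₀ i))
            = (fun i => v₀ i) := by
          rw [Matrix.mulVec_mulVec, Matrix.nonsing_inv_mul _ hSig, Matrix.one_mulVec]
        rw [hcov] at h1
        rw [← h1, Matrix.mulVec_zero]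
      have : v₀ = 0 := by
        ext i
        simpa using congrFun this i
      rw [this] at hv₀norm
      simp at hv₀norm
  -- homogeneity: m * ‖v‖² ≤ G v
  have hbound : ∀ v : E, m * ‖v‖ ^ 2 ≤ G v := by
    intro v
    rcases eq_or_ne v 0 with rfl | hv
    · simp [hG]
    · have hnv : (0:ℝ) < ‖v‖ := norm_pos_iff.mpr hv
      set u : E := ‖v‖⁻¹ • v with hu
      have hun : u ∈ Metric.sphere (0 : E) 1 := by
        rw [mem_sphere_zero_iff_norm, hu, norm_smul, norm_inv, norm_norm,
          inv_mul_cancel₀ (ne_of_gt hnv)]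
      have hGu : G u = ‖v‖⁻¹ ^ 2 * G v := by
        rw [hG]
        simp only
        rw [Finset.mul_sum]
        refine Finset.sum_congr rfl fun z _ => ?_
        have : (φ z ⬝ᵥ fun i => u i) = ‖v‖⁻¹ * (φ z ⬝ᵥ fun i => v i) := by
          have : (fun i => u i) = ‖v‖⁻¹ • (fun i => v i) := rfl
          rw [this, dotProduct_smul, smul_eq_mul]
        rw [this]
        ring
      have hle : m ≤ G u := hmin hun
      rw [hGu] at hle
      have h2 : m * ‖v‖ ^ 2 ≤ (‖v‖⁻¹ ^ 2 * G v) * ‖v‖ ^ 2 :=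
        mul_le_mul_of_nonneg_right hle (sq_nonneg _)
      calc m * ‖v‖ ^ 2 ≤ (‖v‖⁻¹ ^ 2 * G v) * ‖v‖ ^ 2 := h2
        _ = G v := by field_simp
  refine ⟨Real.sqrt m, Real.sqrt_pos.mpr hmpos, fun v => ?_⟩
  set v' : E := (WithLp.equiv 2 (Fin k → ℝ)).symm v with hv'
  have hGv' : G v' = ∑ z : X × A, μ z * (φ z ⬝ᵥ v) ^ 2 := rfl
  have hnorm : ‖v'‖ ^ 2 = ∑ i, v i ^ 2 := by
    rw [EuclideanSpace.norm_eq, Real.sq_sqrt (Finset.sum_nonneg fun i _ => sq_nonneg _)]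
    exact Finset.sum_congr rfl fun i _ => by rw [Real.norm_eq_abs, sq_abs]; rfl
  have hb := hbound v'
  rw [hGv', hnorm] at hb
  rw [enorm2, munorm, ← Real.sqrt_mul hmpos.le]
  refine Real.sqrt_le_sqrt ?_
  calc m * ∑ i, v i ^ 2 ≤ ∑ z : X × A, μ z * (φ z ⬝ᵥ v) ^ 2 := hb
    _ = ∑ z : X × A, μ z * qlin φ v z ^ 2 := rfl

end norms

theorem fixed_points_converge_to_projection_of_qstar
    [Fintype X] [Fintype A] [Nonempty X] [Nonempty A] {k : ℕ}
    (P : X → A → X → ℝ) (r : X × A → ℝ) (γ : ℝ)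
    (hγ0 : 0 ≤ γ) (hγ1 : γ < 1)
    (hP0 : ∀ x a x', 0 ≤ P x a x') (hP1 : ∀ x a, ∑ x' : X, P x a x' = 1)
    (φ : X × A → Fin k → ℝ) (μ : X × A → ℝ) (μmin : ℝ)
    (hμmin : 0 < μmin) (hμ : ∀ z, μmin ≤ μ z) (hμ1 : ∑ z : X × A, μ z = 1)
    (hSig : IsUnit (cov μ φ).det)
    (qstar : X × A → ℝ) (hq : qstar = bellman P r γ qstar)
    (ωstar : Fin k → ℝ)
    (hωstar : ωstar = (cov μ φ)⁻¹.mulVec (∑ z : X × A, (μ z * qstar z) • φ z))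
    (ω : ℕ → Fin k → ℝ)
    (hω : ∃ N : ℕ, ∀ n, N ≤ n →
      qlin φ (ω n) = proj μ φ ((bellman P r γ)^[n] (qlin φ (ω n)))) :
    Filter.Tendsto (fun n => enorm2 (ωstar - ω n)) Filter.atTop (nhds 0) := by
  obtain ⟨N, hN⟩ := hω
  have hμ0 : ∀ z, 0 ≤ μ z := fun z => le_trans hμmin.le (hμ z)
  obtain ⟨c, hc, hcoer⟩ := exists_coercive φ hμmin hμ hSig
  have hfix : ∀ n : ℕ, (bellman P r γ)^[n] qstar = qstar := by
    intro n; induction n with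
    | zero => rfl
    | succ n ih => rw [Function.iterate_succ_apply', ih, ← hq]
  have hpstar : qlin φ ωstar = proj μ φ qstar := by
    funext z; rw [hωstar]; rfl
  set C := supNorm (qstar - qlin φ ωstar) with hC
  set sμ := Real.sqrt μmin with hsμ
  have hsμpos : 0 < sμ := Real.sqrt_pos.mpr hμmin
  have hC0 : 0 ≤ C := supNorm_nonneg _
  have key : ∀ n, N ≤ n → γ ^ n ≤ sμ / 2 →
      munorm μ (qlin φ ωstar - qlin φ (ω n)) ≤ 2 * C * γ ^ n := by
    intro n hn hγn
    set qn := qlin φ (ω n) with hqn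
    set a := munorm μ (qlin φ ωstar - qn) with ha
    have ha0 : 0 ≤ a := munorm_nonneg _ _
    set a' := supNorm (qlin φ ωstar - qn) with ha'
    have ha'0 : 0 ≤ a' := supNorm_nonneg _
    have hstep : a ≤ γ ^ n * (C + a') := by
      have e0 : qn = proj μ φ ((bellman P r γ)^[n] qn) := hN n hn
      have e1 : qlin φ ωstar - qn = proj μ φ (qstar - (bellman P r γ)^[n] qn) := by
        rw [hpstar]
        conv_lhs => rw [e0]
        rw [proj_sub]
      calc a = munorm μ (proj μ φ (qstar - (bellman P r γ)^[n] qn)) := by rw [ha, e1]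
        _ ≤ munorm μ (qstar - (bellman P r γ)^[n] qn) := proj_nonexpansive hμ0 hSig _
        _ = munorm μ ((bellman P r γ)^[n] qstar - (bellman P r γ)^[n] qn) := by
            rw [hfix n]
        _ ≤ supNorm ((bellman P r γ)^[n] qstar - (bellman P r γ)^[n] qn) :=
            munorm_le_supNorm hμ0 hμ1 _
        _ ≤ γ ^ n * supNorm (qstar - qn) := bellman_iter_contraction P r hγ0 hP0 hP1 _ _ n
        _ ≤ γ ^ n * (C + a') := by
            refine mul_le_mul_of_nonneg_left ?_ (pow_nonneg hγ0 n)
            have e2 : qstar - qn = (qstar - qlin φ ωstar) + (qlin φ ωstar - qn) :=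
              (sub_add_sub_cancel _ _ _).symm
            rw [e2]
            exact supNorm_add_le _ _
    have hsa : sμ * a' ≤ a := sqrt_mumin_supNorm_le hμmin hμ _
    have h2 : γ ^ n * a' ≤ a / 2 := by
      calc γ ^ n * a' ≤ (sμ / 2) * a' := mul_le_mul_of_nonneg_right hγn ha'0
        _ = (sμ * a') / 2 := by ring
        _ ≤ a / 2 := by linarith
    rw [mul_add] at hstep
    nlinarith [pow_nonneg hγ0 n]
  have hγto : Filter.Tendsto (fun n => γ ^ n) Filter.atTop (nhds 0) :=
    tendsto_pow_atTop_nhds_zero_of_lt_one hγ0 hγ1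
  have hev : ∀ᶠ n in Filter.atTop, enorm2 (ωstar - ω n) ≤ (2 * C / c) * γ ^ n := by
    have h1 : ∀ᶠ n in Filter.atTop, γ ^ n ≤ sμ / 2 :=
      hγto.eventually (eventually_le_nhds (by positivity))
    filter_upwards [h1, Filter.eventually_ge_atTop N] with n hγn hn
    have hql : qlin φ (ωstar - ω n) = qlin φ ωstar - qlin φ (ω n) := by
      funext z
      simp [qlin, dotProduct_sub]
    have h3 : c * enorm2 (ωstar - ω n) ≤ 2 * C * γ ^ n := by
      calc c * enorm2 (ωstar - ω n) ≤ munorm μ (qlin φ (ωstar - ω n)) := hcoer _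
        _ = munorm μ (qlin φ ωstar - qlin φ (ω n)) := by rw [hql]
        _ ≤ 2 * C * γ ^ n := key n hn hγn
    rw [div_mul_eq_mul_div, le_div_iff₀ hc]
    linarith
  refine squeeze_zero' (Filter.Eventually.of_forall fun n => Real.sqrt_nonneg _) hev ?_
  simpa using hγto.const_mul (2 * C / c)
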